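/- Let A, B be distinct n×n complex positive definite matrices, and let μ_1 ≥ … ≥ μ_n be the eigenvalues of A^{-1} ♯ B. For s, t ∈ ℝ with 1 − s + sμ_1 > 0 and 1 − s + sμ_n > 0, set m = min_{1≤i≤n} (1 − s + sμ_i)/μ_i^t and M = max_{1≤i≤n} (1 − s + sμ_i)/μ_i^t. Then m^2 · (A ♮_t B) ⪯ A ◇_s B and A ◇_s B ⪯ M^2 · (A ♮_t B), where ⪯ is the near order. -/

import Mathlib

open scoped ComplexOrder Matrix

noncomputable section

/-- Real power of a (positive definite) matrix via the continuous functional calculus. -/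
def mpow {n : ℕ} (A : Matrix (Fin n) (Fin n) ℂ) (t : ℝ) : Matrix (Fin n) (Fin n) ℂ :=
  cfc (fun x : ℝ => x ^ t) A

/-- The matrix logarithm of a (positive definite) matrix via the continuous functional calculus. -/
def mlog {n : ℕ} (A : Matrix (Fin n) (Fin n) ℂ) : Matrix (Fin n) (Fin n) ℂ :=
  cfc Real.log A

/-- The metric geometric mean `A ♯ₜ B = A^{1/2} (A^{-1/2} B A^{-1/2})^t A^{1/2}`.
`A ♯ B` is `gmean A B (1/2)`. -/
def gmean {n : ℕ} (A B : Matrix (Fin n) (Fin n) ℂ) (t : ℝ) : Matrix (Fin n) (Fin n) ℂ :=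
  mpow A (1/2) * mpow (mpow A (-(1/2)) * B * mpow A (-(1/2))) t * mpow A (1/2)

/-- The Loewner order: `A ≤ B` iff `B - A` is positive semidefinite. -/
def LoewnerLE {n : ℕ} (A B : Matrix (Fin n) (Fin n) ℂ) : Prop :=
  (B - A).PosSemidef

/-- The near order: `A ⪯ B` iff `I ≤ A⁻¹ ♯ B` in the Loewner order. -/
def NearLE {n : ℕ} (A B : Matrix (Fin n) (Fin n) ℂ) : Prop :=
  LoewnerLE 1 (gmean A⁻¹ B (1/2))

/-- The spectral geometric mean `A ♮ₜ B = (A⁻¹ ♯ B)^t A (A⁻¹ ♯ B)^t`. -/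
def smean {n : ℕ} (A B : Matrix (Fin n) (Fin n) ℂ) (t : ℝ) : Matrix (Fin n) (Fin n) ℂ :=
  mpow (gmean A⁻¹ B (1/2)) t * A * mpow (gmean A⁻¹ B (1/2)) t

/-- The Wasserstein mean `A ◇ₜ B = [(1-t)I + t(A⁻¹ ♯ B)] A [(1-t)I + t(A⁻¹ ♯ B)]`. -/
def wmean {n : ℕ} (A B : Matrix (Fin n) (Fin n) ℂ) (t : ℝ) : Matrix (Fin n) (Fin n) ℂ :=
  (((1 - t : ℝ) : ℂ) • (1 : Matrix (Fin n) (Fin n) ℂ) + ((t : ℝ) : ℂ) • gmean A⁻¹ B (1/2)) * A *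
    (((1 - t : ℝ) : ℂ) • (1 : Matrix (Fin n) (Fin n) ℂ) + ((t : ℝ) : ℂ) • gmean A⁻¹ B (1/2))

/-- The arithmetic mean `A ∇ₜ B = (1-t)A + tB`. -/
def amean {n : ℕ} (A B : Matrix (Fin n) (Fin n) ℂ) (t : ℝ) : Matrix (Fin n) (Fin n) ℂ :=
  ((1 - t : ℝ) : ℂ) • A + ((t : ℝ) : ℂ) • B

/-- The matrix absolute value `|X| = (XᴴX)^{1/2}`. -/
def matAbs {n : ℕ} (X : Matrix (Fin n) (Fin n) ℂ) : Matrix (Fin n) (Fin n) ℂ :=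
  mpow (Xᴴ * X) (1/2)

/-- The eigenvalues of a Hermitian matrix listed in nonincreasing order:
`eigDesc hA i` is `λ_{i+1}(A)`, so `eigDesc hA 0 = λ₁(A) ≥ eigDesc hA 1 = λ₂(A) ≥ ⋯`. -/
def eigDesc {n : ℕ} {A : Matrix (Fin n) (Fin n) ℂ} (hA : A.IsHermitian) : Fin n → ℝ :=
  fun i => (hA.eigenvalues ∘ Tuple.sort hA.eigenvalues) i.rev

section Aux

variable {n : ℕ}

lemma posDef_of_isUnit {A : Matrix (Fin n) (Fin n) ℂ} (hA : A.PosSemidef) (hU : IsUnit A) :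
    A.PosDef := by
  exact hA.posDef_iff_isUnit.mpr hU

lemma specPos {A : Matrix (Fin n) (Fin n) ℂ} (hA : A.PosDef) :
    ∀ x ∈ spectrum ℝ A, 0 < x := by
  intro x hx
  rw [hA.isHermitian.spectrum_real_eq_range_eigenvalues] at hx
  obtain ⟨i, rfl⟩ := hx
  exact hA.eigenvalues_pos i

lemma cfc_posSemidef {A : Matrix (Fin n) (Fin n) ℂ} (ha : IsSelfAdjoint A) (f : ℝ → ℝ)
    (hf : ContinuousOn f (spectrum ℝ A)) (hf0 : ∀ x ∈ spectrum ℝ A, 0 ≤ f x) :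
    (cfc f A).PosSemidef := by
  have h1 : cfc f A = cfc (fun x => Real.sqrt (f x) * Real.sqrt (f x)) A := by
    apply cfc_congr
    intro x hx
    exact (Real.mul_self_sqrt (hf0 x hx)).symm
  have hsc : ContinuousOn (fun x => Real.sqrt (f x)) (spectrum ℝ A) :=
    Real.continuous_sqrt.comp_continuousOn hf
  rw [h1, cfc_mul _ _ A hsc hsc]
  have hsa : IsSelfAdjoint (cfc (fun x => Real.sqrt (f x)) A) := cfc_predicate _ A
  have := Matrix.posSemidef_conjTranspose_mul_self (cfc (fun x => Real.sqrt (f x)) A)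
  rwa [← Matrix.star_eq_conjTranspose, hsa.star_eq] at this

lemma cfc_posDef {A : Matrix (Fin n) (Fin n) ℂ} (ha : IsSelfAdjoint A) (f : ℝ → ℝ)
    (hf : ContinuousOn f (spectrum ℝ A)) (hf0 : ∀ x ∈ spectrum ℝ A, 0 < f x) :
    (cfc f A).PosDef := by
  refine posDef_of_isUnit (cfc_posSemidef ha f hf fun x hx => (hf0 x hx).le) ?_
  have hfi : ContinuousOn (fun x => (f x)⁻¹) (spectrum ℝ A) :=
    hf.inv₀ fun x hx => (hf0 x hx).ne'
  have h1 : cfc f A * cfc (fun x => (f x)⁻¹) A = 1 := by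
    rw [← cfc_mul _ _ A hf hfi]
    calc cfc (fun x => f x * (f x)⁻¹) A = cfc (fun _ : ℝ => (1:ℝ)) A := by
          apply cfc_congr; intro x hx; exact mul_inv_cancel₀ (hf0 x hx).ne'
      _ = 1 := cfc_const_one ℝ A ha
  have h2 := h1
  rw [(cfc_commute_cfc f (fun x => (f x)⁻¹) A).eq] at h2
  exact ⟨⟨cfc f A, cfc (fun x => (f x)⁻¹) A, h1, h2⟩, rfl⟩

lemma rpow_contOn {A : Matrix (Fin n) (Fin n) ℂ} (hA : A.PosDef) (t : ℝ) :
    ContinuousOn (fun x : ℝ => x ^ t) (spectrum ℝ A) := fun x hx =>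
  (Real.continuousAt_rpow_const x t (Or.inl (specPos hA x hx).ne')).continuousWithinAt

lemma mpow_posDef {A : Matrix (Fin n) (Fin n) ℂ} (hA : A.PosDef) (t : ℝ) :
    (mpow A t).PosDef :=
  cfc_posDef hA.isHermitian.isSelfAdjoint _ (rpow_contOn hA t)
    (fun x hx => Real.rpow_pos_of_pos (specPos hA x hx) t)

lemma mpow_mul_mpow {A : Matrix (Fin n) (Fin n) ℂ} (hA : A.PosDef) (a b : ℝ) :
    mpow A a * mpow A b = mpow A (a + b) := by
  unfold mpow
  rw [← cfc_mul _ _ A (rpow_contOn hA a) (rpow_contOn hA b)]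
  apply cfc_congr
  intro x hx
  exact (Real.rpow_add (specPos hA x hx) a b).symm

lemma mpow_zero {A : Matrix (Fin n) (Fin n) ℂ} (hA : A.PosDef) : mpow A 0 = 1 := by
  unfold mpow
  calc cfc (fun x : ℝ => x ^ (0:ℝ)) A = cfc (fun _ : ℝ => (1:ℝ)) A := by
        apply cfc_congr; intro x _; exact Real.rpow_zero x
    _ = 1 := cfc_const_one ℝ A hA.isHermitian.isSelfAdjoint

lemma mpow_one {A : Matrix (Fin n) (Fin n) ℂ} (hA : A.PosDef) : mpow A 1 = A := by
  unfold mpow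
  calc cfc (fun x : ℝ => x ^ (1:ℝ)) A = cfc (fun x : ℝ => x) A := by
        apply cfc_congr; intro x _; exact Real.rpow_one x
    _ = A := cfc_id' ℝ A hA.isHermitian.isSelfAdjoint

lemma matrix_inv_eq_cfc {A : Matrix (Fin n) (Fin n) ℂ} (hA : A.PosDef) :
    A⁻¹ = cfc (fun x : ℝ => x⁻¹) A := by
  apply Matrix.inv_eq_left_inv
  have hc : ContinuousOn (fun x : ℝ => x⁻¹) (spectrum ℝ A) :=
    continuousOn_inv₀.mono fun x hx => (specPos hA x hx).ne'
  have hid : ContinuousOn (fun x : ℝ => x) (spectrum ℝ A) := continuousOn_id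
  nth_rewrite 2 [← cfc_id' ℝ A hA.isHermitian.isSelfAdjoint]
  rw [← cfc_mul _ _ A hc hid]
  calc cfc (fun x : ℝ => x⁻¹ * x) A = cfc (fun _ : ℝ => (1:ℝ)) A := by
        apply cfc_congr; intro x hx; exact inv_mul_cancel₀ (specPos hA x hx).ne'
    _ = 1 := cfc_const_one ℝ A hA.isHermitian.isSelfAdjoint

lemma mpow_inv {A : Matrix (Fin n) (Fin n) ℂ} (hA : A.PosDef) (u : ℝ) :
    mpow A⁻¹ u = mpow A (-u) := by
  have hc : ContinuousOn (fun x : ℝ => x⁻¹) (spectrum ℝ A) :=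
    continuousOn_inv₀.mono fun x hx => (specPos hA x hx).ne'
  have himg : ContinuousOn (fun x : ℝ => x ^ u) ((fun x : ℝ => x⁻¹) '' spectrum ℝ A) := by
    intro x hx
    obtain ⟨y, hy, rfl⟩ := hx
    exact (Real.continuousAt_rpow_const _ u
      (Or.inl (inv_pos.mpr (specPos hA y hy)).ne')).continuousWithinAt
  rw [mpow, matrix_inv_eq_cfc hA,
    ← cfc_comp' (fun x : ℝ => x ^ u) (fun x : ℝ => x⁻¹) A himg hc hA.isHermitian.isSelfAdjoint]
  apply cfc_congr
  intro x hx
  have hx0 := specPos hA x hx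
  simp only []
  rw [Real.inv_rpow hx0.le, ← Real.rpow_neg hx0.le]

lemma conj_posDef {M P : Matrix (Fin n) (Fin n) ℂ} (hM : M.PosDef) (hP : P.PosDef) :
    (P * M * P).PosDef := by
  have h1 : (P * M * Pᴴ).PosSemidef := hM.posSemidef.mul_mul_conjTranspose_same P
  rw [hP.isHermitian.eq] at h1
  exact posDef_of_isUnit h1 ((hP.isUnit.mul hM.isUnit).mul hP.isUnit)

lemma mul_self_posDef {S : Matrix (Fin n) (Fin n) ℂ} (hS : S.PosDef) : (S * S).PosDef := by
  have h1 : (Sᴴ * S).PosSemidef := Matrix.posSemidef_conjTranspose_mul_self S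
  rw [hS.isHermitian.eq] at h1
  exact posDef_of_isUnit h1 (hS.isUnit.mul hS.isUnit)

lemma mpow_mul_self_half {S : Matrix (Fin n) (Fin n) ℂ} (hS : S.PosDef) :
    mpow (S * S) (1/2) = S := by
  have hM : (S * S).PosDef := mul_self_posDef hS
  open scoped MatrixOrder in
  apply (CFC.sq_eq_sq_iff _ _ (mpow_posDef hM (1/2)).posSemidef.nonneg hS.posSemidef.nonneg).mp
  rw [pow_two, pow_two, mpow_mul_mpow hM]
  norm_num
  exact mpow_one hM

lemma riccati {X R : Matrix (Fin n) (Fin n) ℂ} (hX : X.PosDef) (hR : R.PosDef) :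
    gmean X⁻¹ (R * X * R) (1/2) = R := by
  have hXh := mpow_posDef hX (1/2)
  have hXX : mpow X (1/2) * mpow X (1/2) = X := by
    rw [mpow_mul_mpow hX]; norm_num; exact mpow_one hX
  have hmix : mpow X (-(1/2)) * mpow X (1/2) = 1 := by
    rw [mpow_mul_mpow hX]; norm_num; exact mpow_zero hX
  have hmix' : mpow X (1/2) * mpow X (-(1/2)) = 1 := by
    rw [mpow_mul_mpow hX]; norm_num; exact mpow_zero hX
  have hS : (mpow X (1/2) * R * mpow X (1/2)).PosDef := conj_posDef hR hXh
  have key : mpow X (1/2) * (R * X * R) * mpow X (1/2)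
      = (mpow X (1/2) * R * mpow X (1/2)) * (mpow X (1/2) * R * mpow X (1/2)) := by
    nth_rewrite 2 [← hXX]
    noncomm_ring
  rw [gmean, mpow_inv hX, mpow_inv hX, neg_neg, key, mpow_mul_self_half hS]
  calc mpow X (-(1/2)) * (mpow X (1/2) * R * mpow X (1/2)) * mpow X (-(1/2))
      = (mpow X (-(1/2)) * mpow X (1/2)) * R * (mpow X (1/2) * mpow X (-(1/2))) := by
        noncomm_ring
    _ = R := by rw [hmix, hmix', one_mul, mul_one]

lemma nearLE_of {C A : Matrix (Fin n) (Fin n) ℂ} (hC : C.PosDef) (hA : A.PosDef)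
    (p q : ℝ → ℝ)
    (hpc : ContinuousOn p (spectrum ℝ C)) (hqc : ContinuousOn q (spectrum ℝ C))
    (hp0 : ∀ x ∈ spectrum ℝ C, 0 < p x) (hq0 : ∀ x ∈ spectrum ℝ C, 0 < q x)
    (hle : ∀ x ∈ spectrum ℝ C, p x ≤ q x) :
    NearLE (cfc p C * A * cfc p C) (cfc q C * A * cfc q C) := by
  have hsa : IsSelfAdjoint C := hC.isHermitian.isSelfAdjoint
  set P := cfc p C with hPdef
  set Q := cfc q C with hQdef
  have hrc : ContinuousOn (fun x => q x / p x) (spectrum ℝ C) :=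
    hqc.div hpc fun x hx => (hp0 x hx).ne'
  set R := cfc (fun x => q x / p x) C with hRdef
  have hP : P.PosDef := cfc_posDef hsa p hpc hp0
  have hR : R.PosDef := cfc_posDef hsa _ hrc fun x hx => div_pos (hq0 x hx) (hp0 x hx)
  have hRP : R * P = Q := by
    rw [hRdef, hPdef, ← cfc_mul _ _ C hrc hpc]
    apply cfc_congr
    intro x hx
    exact div_mul_cancel₀ _ (hp0 x hx).ne'
  have hPR : P * R = Q := by
    rw [hRdef, hPdef, ← cfc_mul _ _ C hpc hrc]
    apply cfc_congr
    intro x hx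
    show p x * (q x / p x) = q x
    rw [mul_comm]
    exact div_mul_cancel₀ _ (hp0 x hx).ne'
  have hX : (P * A * P).PosDef := conj_posDef hA hP
  have hRXR : R * (P * A * P) * R = Q * A * Q := by
    calc R * (P * A * P) * R = (R * P) * A * (P * R) := by noncomm_ring
      _ = Q * A * Q := by rw [hRP, hPR]
  show LoewnerLE 1 (gmean (P * A * P)⁻¹ (Q * A * Q) (1/2))
  rw [← hRXR, riccati hX hR]
  show (R - 1).PosSemidef
  have h1 : R - 1 = cfc (fun x => q x / p x - 1) C := by
    rw [cfc_sub _ _ C hrc (continuousOn_const), cfc_const_one ℝ C hsa, hRdef]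
  rw [h1]
  exact cfc_posSemidef hsa _ (hrc.sub continuousOn_const)
    fun x hx => by
      have := (one_le_div (hp0 x hx)).mpr (hle x hx)
      linarith

lemma rsmul (r : ℝ) (M : Matrix (Fin n) (Fin n) ℂ) : r • M = ((r : ℂ)) • M := by
  ext i j
  simp [Matrix.smul_apply, Complex.real_smul]

lemma gmean_posDef {A B : Matrix (Fin n) (Fin n) ℂ} (hA : A.PosDef) (hB : B.PosDef) (t : ℝ) :
    (gmean A B t).PosDef := by
  have h1 : (mpow A (-(1/2)) * B * mpow A (-(1/2))).PosDef :=
    conj_posDef hB (mpow_posDef hA _)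
  exact conj_posDef (mpow_posDef h1 t) (mpow_posDef hA _)

end Aux

/-- for distinct `A, B` with `μ₁ ≥ ⋯ ≥ μₙ` the eigenvalues of `A⁻¹ ♯ B`,
if `1 − s + sμ₁ > 0` and `1 − s + sμₙ > 0`, then with
`m = min_i (1 − s + sμᵢ)/μᵢ^t` and `M = max_i (1 − s + sμᵢ)/μᵢ^t`:
`m² (A ♮ₜ B) ⪯ A ◇ₛ B ⪯ M² (A ♮ₜ B)`. -/
theorem smean_wmean_near_order_range {n : ℕ} (A B : Matrix (Fin n) (Fin n) ℂ)
    (hA : A.PosDef) (hB : B.PosDef) (hAB : A ≠ B)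
    (h : (gmean A⁻¹ B (1/2)).IsHermitian) (s t : ℝ)
    (hs1 : 0 < 1 - s + s * (⨆ i, h.eigenvalues i))
    (hsn : 0 < 1 - s + s * (⨅ i, h.eigenvalues i)) :
    NearLE ((((⨅ i, (1 - s + s * h.eigenvalues i) / h.eigenvalues i ^ t) ^ 2 : ℝ) : ℂ) •
        smean A B t) (wmean A B s) ∧
    NearLE (wmean A B s)
      ((((⨆ i, (1 - s + s * h.eigenvalues i) / h.eigenvalues i ^ t) ^ 2 : ℝ) : ℂ) •
        smean A B t) := by
  rcases Nat.eq_zero_or_pos n with hn | hn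
  · subst hn
    exact absurd (by ext i j; exact i.elim0) hAB
  have hne : Nonempty (Fin n) := ⟨⟨0, hn⟩⟩
  have hC : (gmean A⁻¹ B (1/2)).PosDef := gmean_posDef hA.inv hB _
  set C := gmean A⁻¹ B (1/2) with hCdef
  have hsa : IsSelfAdjoint C := hC.isHermitian.isSelfAdjoint
  have hspec : spectrum ℝ C = Set.range h.eigenvalues := h.spectrum_real_eq_range_eigenvalues
  have hμ : ∀ i, 0 < h.eigenvalues i := fun i => hC.eigenvalues_pos i
  -- positivity of g on the spectrum
  have hμbdd : ∀ i, (⨅ j, h.eigenvalues j) ≤ h.eigenvalues i ∧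
      h.eigenvalues i ≤ ⨆ j, h.eigenvalues j := fun i =>
    ⟨ciInf_le (Set.finite_range _).bddBelow i, le_ciSup (Set.finite_range _).bddAbove i⟩
  have hg0 : ∀ x ∈ spectrum ℝ C, 0 < 1 - s + s * x := by
    intro x hx
    rw [hspec] at hx
    obtain ⟨i, rfl⟩ := hx
    rcases le_or_gt 0 s with hs | hs
    · have := mul_le_mul_of_nonneg_left (hμbdd i).1 hs
      linarith
    · have := mul_le_mul_of_nonpos_left (hμbdd i).2 hs.le
      linarith
  -- the ratio function
  set f : Fin n → ℝ := fun i => (1 - s + s * h.eigenvalues i) / h.eigenvalues i ^ t with hfdef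
  have hf0 : ∀ i, 0 < f i := fun i =>
    div_pos (hg0 _ (hspec ▸ Set.mem_range_self i)) (Real.rpow_pos_of_pos (hμ i) t)
  have hmle : ∀ i, (⨅ j, f j) ≤ f i := fun i => ciInf_le (Set.finite_range _).bddBelow i
  have hMle : ∀ i, f i ≤ ⨆ j, f j := fun i => le_ciSup (Set.finite_range _).bddAbove i
  obtain ⟨i₀, hi₀⟩ := Finite.exists_min f
  have hm0 : 0 < ⨅ j, f j := lt_of_lt_of_le (hf0 i₀) (le_ciInf hi₀)
  have hM0 : 0 < ⨆ j, f j := lt_of_lt_of_le (hf0 i₀) (hMle i₀)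
  set m := ⨅ j, f j
  set M := ⨆ j, f j
  -- continuity data
  have hgc : ContinuousOn (fun x : ℝ => 1 - s + s * x) (spectrum ℝ C) :=
    (continuous_const.add (continuous_const.mul continuous_id)).continuousOn
  have hmc : ContinuousOn (fun x : ℝ => m * x ^ t) (spectrum ℝ C) :=
    continuousOn_const.mul (rpow_contOn hC t)
  have hMc : ContinuousOn (fun x : ℝ => M * x ^ t) (spectrum ℝ C) :=
    continuousOn_const.mul (rpow_contOn hC t)
  have hm0' : ∀ x ∈ spectrum ℝ C, 0 < m * x ^ t := fun x hx =>
    mul_pos hm0 (Real.rpow_pos_of_pos (specPos hC x hx) t)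
  have hM0' : ∀ x ∈ spectrum ℝ C, 0 < M * x ^ t := fun x hx =>
    mul_pos hM0 (Real.rpow_pos_of_pos (specPos hC x hx) t)
  -- the two scalar inequalities
  have hle1 : ∀ x ∈ spectrum ℝ C, m * x ^ t ≤ 1 - s + s * x := by
    intro x hx
    rw [hspec] at hx
    obtain ⟨i, rfl⟩ := hx
    have := hmle i
    rw [hfdef] at this
    have hpow := Real.rpow_pos_of_pos (hμ i) t
    calc m * h.eigenvalues i ^ t ≤ ((1 - s + s * h.eigenvalues i) / h.eigenvalues i ^ t) *
          h.eigenvalues i ^ t := by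
          exact mul_le_mul_of_nonneg_right this hpow.le
      _ = 1 - s + s * h.eigenvalues i := div_mul_cancel₀ _ hpow.ne'
  have hle2 : ∀ x ∈ spectrum ℝ C, 1 - s + s * x ≤ M * x ^ t := by
    intro x hx
    rw [hspec] at hx
    obtain ⟨i, rfl⟩ := hx
    have := hMle i
    rw [hfdef] at this
    have hpow := Real.rpow_pos_of_pos (hμ i) t
    calc 1 - s + s * h.eigenvalues i
        = ((1 - s + s * h.eigenvalues i) / h.eigenvalues i ^ t) * h.eigenvalues i ^ t :=
          (div_mul_cancel₀ _ hpow.ne').symm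
      _ ≤ M * h.eigenvalues i ^ t := mul_le_mul_of_nonneg_right this hpow.le
  -- matrix identifications
  have hQeq : cfc (fun x : ℝ => 1 - s + s * x) C
      = ((1 - s : ℝ) : ℂ) • (1 : Matrix (Fin n) (Fin n) ℂ) + ((s : ℝ) : ℂ) • C := by
    rw [cfc_const_add (1 - s) (fun x : ℝ => s * x) C
        ((continuous_const.mul continuous_id).continuousOn) hsa,
      cfc_const_mul_id s C hsa, Algebra.algebraMap_eq_smul_one, rsmul, rsmul]
  have hwm : wmean A B s = cfc (fun x : ℝ => 1 - s + s * x) C *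
      A * cfc (fun x : ℝ => 1 - s + s * x) C := by
    rw [hQeq]; rfl
  have hsm : ∀ c : ℝ, 0 < c → cfc (fun x : ℝ => c * x ^ t) C * A * cfc (fun x : ℝ => c * x ^ t) C
      = (((c ^ 2 : ℝ)) : ℂ) • smean A B t := by
    intro c hc
    have h1 : cfc (fun x : ℝ => c * x ^ t) C = c • mpow C t :=
      cfc_const_mul c (fun x : ℝ => x ^ t) C (rpow_contOn hC t)
    have hsm' : smean A B t = mpow C t * A * mpow C t := rfl
    rw [h1, rsmul, hsm', smul_mul_assoc, smul_mul_assoc, mul_smul_comm, smul_smul]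
    congr 1
    push_cast
    ring
  constructor
  · have := nearLE_of hC hA (fun x : ℝ => m * x ^ t) (fun x : ℝ => 1 - s + s * x)
      hmc hgc hm0' hg0 hle1
    rwa [hsm m hm0, ← hwm] at this
  · have := nearLE_of hC hA (fun x : ℝ => 1 - s + s * x) (fun x : ℝ => M * x ^ t)
      hgc hMc hg0 hM0' hle2
    rwa [hsm M hM0, ← hwm] at this
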